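/- Let V be a nonempty finite set, f : 2^V → ℝ a set function with f(∅) = 0, and α₁ < α₂ real numbers. Let P be a minimizer of f_{α₁}[·] over all partitions of V and P' a minimizer of f_{α₂}[·] over all partitions of V, and suppose |P| > |P'|. Define α* = f(V) − (f[P] − f[P'])/(|P| − |P'|), where f[P] = Σ_{C ∈ P} f(C). Then α₁ ≤ α* ≤ α₂, and the two partitions have equal partition-function value at α*: f_{α*}[P] = f_{α*}[P']. -/

import Mathlib

open Finset

variable {α : Type*}

/-- The residual function `f_α(X) = f(X) - f(V) + α` for nonempty `X`, and `0` on `∅`. -/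
noncomputable def resFn [DecidableEq α] (f : Finset α → ℝ) (V : Finset α) (a : ℝ)
    (X : Finset α) : ℝ :=
  if X = ∅ then 0 else f X - f V + a

/-- The partition sum `f_α[P] = Σ_{C ∈ P} f_α(C)`. -/
noncomputable def partSum [DecidableEq α] (f : Finset α → ℝ) (V : Finset α) (a : ℝ)
    {X : Finset α} (P : Finpartition X) : ℝ :=
  ∑ C ∈ P.parts, resFn f V a C

/-- The Dilworth truncation `f̂_α(X) = min over partitions P of X of f_α[P]`. -/
noncomputable def dilworth [DecidableEq α] (f : Finset α → ℝ) (V : Finset α) (a : ℝ)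
    (X : Finset α) : ℝ :=
  sInf {y : ℝ | ∃ P : Finpartition X, partSum f V a P = y}

/-- Lemma 8 (locating critical values of the PSP): if `P` minimizes `f_{α₁}[·]`,
`P'` minimizes `f_{α₂}[·]`, `α₁ < α₂` and `|P| > |P'|`, then
`α* = f(V) − (f[P] − f[P'])/(|P| − |P'|)` lies in `[α₁, α₂]` and
`f_{α*}[P] = f_{α*}[P']`. -/
theorem critical_value_location [DecidableEq α] (V : Finset α) (hV : V.Nonempty)
    (f : Finset α → ℝ) (hf : f ∅ = 0) (a₁ a₂ : ℝ) (h12 : a₁ < a₂)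
    (P P' : Finpartition V)
    (hP : ∀ Q : Finpartition V, partSum f V a₁ P ≤ partSum f V a₁ Q)
    (hP' : ∀ Q : Finpartition V, partSum f V a₂ P' ≤ partSum f V a₂ Q)
    (hcard : P'.parts.card < P.parts.card) :
    ∀ astar : ℝ,
      astar = f V - ((∑ C ∈ P.parts, f C) - ∑ C ∈ P'.parts, f C) /
        ((P.parts.card : ℝ) - (P'.parts.card : ℝ)) →
      a₁ ≤ astar ∧ astar ≤ a₂ ∧ partSum f V astar P = partSum f V astar P' := by
  have key : ∀ (a : ℝ) (Q : Finpartition V),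
      partSum f V a Q = (∑ C ∈ Q.parts, f C) - Q.parts.card * f V + Q.parts.card * a := by
    intro a Q
    have : partSum f V a Q = ∑ C ∈ Q.parts, (f C - f V + a) := by
      refine Finset.sum_congr rfl fun C hC => ?_
      have : C ≠ ∅ := by
        intro h
        subst h; exact Q.bot_notMem hC
      simp [resFn, this]
    rw [this]
    rw [Finset.sum_add_distrib, Finset.sum_sub_distrib, Finset.sum_const, Finset.sum_const]
    push_cast
    ring
  intro astar hstar
  set n : ℝ := (P.parts.card : ℝ)
  set n' : ℝ := (P'.parts.card : ℝ)
  set F : ℝ := ∑ C ∈ P.parts, f C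
  set F' : ℝ := ∑ C ∈ P'.parts, f C
  have hn : n' < n := by unfold n n'; exact_mod_cast hcard
  have hpos : 0 < n - n' := by linarith
  have h1 : F - n * f V + n * a₁ ≤ F' - n' * f V + n' * a₁ := by
    have := hP P'; rwa [key, key] at this
  have h2 : F' - n' * f V + n' * a₂ ≤ F - n * f V + n * a₂ := by
    have := hP' P; rwa [key, key] at this
  have hstar' : astar * (n - n') = f V * (n - n') - (F - F') := by
    rw [hstar]
    field_simp
  have ha1 : a₁ ≤ astar := by
    have h := mul_le_mul_of_nonneg_right (le_refl (astar - a₁)) hpos.le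
    nlinarith [hstar']
  have ha2 : astar ≤ a₂ := by nlinarith [hstar']
  refine ⟨ha1, ha2, ?_⟩
  rw [key, key]
  nlinarith [hstar']
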